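/- For all natural numbers m, n ≥ 1, the free abelian group ℤ^m preforms ℤ^n (i.e., ℤ^m ⊑ ℤ^n) if and only if m ≤ n. -/

import Mathlib

open Multiplicative

variable {k d : ℕ}

/-- standard basis of ℤ^k, multiplicatively -/
def stdE (k : ℕ) : Fin k → (Fin k → Multiplicative ℤ) :=
  fun i a => ofAdd (if i = a then 1 else 0)

/-- exponent vector of a word -/
def expVec (w : FreeGroup (Fin k)) : Fin k → ℤ :=
  fun i => toAdd (FreeGroup.lift (stdE k) w i)

/-- the linear map determined by a tuple -/
def Lmap (c' : Fin k → (Fin d → ℤ)) : (Fin k → ℤ) →ₗ[ℤ] (Fin d → ℤ) where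
  toFun v := ∑ i, v i • c' i
  map_add' x y := by simp [add_smul, Finset.sum_add_distrib]
  map_smul' r x := by
    ext a
    simp [Finset.sum_apply, Finset.mul_sum, mul_assoc]

theorem lift_eq_prod (c : Fin k → (Fin d → Multiplicative ℤ)) (w : FreeGroup (Fin k)) :
    FreeGroup.lift c w = ∏ i, c i ^ (expVec w i) := by
  let f : (Fin k → Multiplicative ℤ) →* (Fin d → Multiplicative ℤ) :=
    { toFun := fun x => ∏ i, c i ^ (toAdd (x i))
      map_one' := by simp
      map_mul' := by
        intro x y
        simp [zpow_add, Finset.prod_mul_distrib] }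
  have key : FreeGroup.lift c = f.comp (FreeGroup.lift (stdE k)) := by
    apply FreeGroup.ext_hom
    intro a
    simp only [FreeGroup.lift_apply_of, MonoidHom.comp_apply]
    show c a = ∏ i, c i ^ (toAdd (stdE k a i))
    rw [Finset.prod_eq_single a]
    · simp [stdE]
    · intro b _ hb
      simp [stdE, if_neg (Ne.symm hb)]
    · simp
  rw [key]
  rfl

theorem lift_eq_one_iff (c : Fin k → (Fin d → Multiplicative ℤ)) (w : FreeGroup (Fin k)) :
    FreeGroup.lift c w = 1 ↔ Lmap (fun i a => toAdd (c i a)) (expVec w) = 0 := by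
  rw [lift_eq_prod, funext_iff, funext_iff]
  apply forall_congr'
  intro a
  rw [show (∏ i, c i ^ expVec w i) a = ∏ i, (c i a) ^ expVec w i by simp,
    Pi.one_apply, Pi.zero_apply,
    show ((∏ i, (c i a) ^ expVec w i) = 1 ↔ toAdd (∏ i, (c i a) ^ expVec w i) = 0) from Iff.rfl,
    toAdd_prod]
  simp [Lmap, toAdd_zpow, Finset.sum_apply]

theorem Lmap_apply (c' : Fin k → (Fin d → ℤ)) (v : Fin k → ℤ) :
    Lmap c' v = ∑ i, v i • c' i := rfl

theorem Lmap_single (c' : Fin k → (Fin d → ℤ)) (i : Fin k) :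
    Lmap c' (Pi.single i 1) = c' i := by
  rw [Lmap_apply, Finset.sum_eq_single i]
  · simp
  · intro b _ hb; simp [Pi.single_apply, hb]
  · simp

theorem Lmap_surjective (c' : Fin k → (Fin d → ℤ))
    (h : Submodule.span ℤ (Set.range c') = ⊤) : Function.Surjective (Lmap c') := by
  rw [← LinearMap.range_eq_top]
  rw [← top_le_iff, ← h, Submodule.span_le]
  rintro x ⟨i, rfl⟩
  exact ⟨Pi.single i 1, Lmap_single c' i⟩

theorem closure_iff_span (c : Fin k → (Fin d → Multiplicative ℤ)) :
    Subgroup.closure (Set.range c) = ⊤ ↔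
      Submodule.span ℤ (Set.range (fun i a => toAdd (c i a))) = ⊤ := by
  set c' : Fin k → (Fin d → ℤ) := fun i a => toAdd (c i a) with hc'
  have key : ∀ x : Fin d → Multiplicative ℤ,
      x ∈ Subgroup.closure (Set.range c) ↔
        (fun a => toAdd (x a)) ∈ AddSubgroup.closure (Set.range c') := by
    intro x
    constructor
    · intro hx
      induction hx using Subgroup.closure_induction with
      | mem y hy =>
        obtain ⟨i, rfl⟩ := hy
        exact AddSubgroup.subset_closure ⟨i, rfl⟩
      | one => exact AddSubgroup.zero_mem _
      | mul y z _ _ hy hz => exact AddSubgroup.add_mem _ hy hz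
      | inv y _ hy => exact AddSubgroup.neg_mem _ hy
    · intro hx
      have : ∀ y : Fin d → ℤ, y ∈ AddSubgroup.closure (Set.range c') →
          (fun a => ofAdd (y a)) ∈ Subgroup.closure (Set.range c) := by
        intro y hy
        induction hy using AddSubgroup.closure_induction with
        | mem z hz =>
          obtain ⟨i, rfl⟩ := hz
          exact Subgroup.subset_closure ⟨i, rfl⟩
        | zero => exact Subgroup.one_mem _
        | add y z _ _ hy hz => exact Subgroup.mul_mem _ hy hz
        | neg y _ hy => exact Subgroup.inv_mem _ hy
      exact this _ hx
  have mem_iff : ∀ y, y ∈ Submodule.span ℤ (Set.range c') ↔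
      y ∈ AddSubgroup.closure (Set.range c') := by
    intro y
    rw [← Submodule.span_int_eq_addSubgroupClosure, Submodule.mem_toAddSubgroup]
  rw [Subgroup.eq_top_iff', Submodule.eq_top_iff']
  constructor
  · intro h y
    exact (mem_iff y).mpr ((key (fun a => ofAdd (y a))).mp (h _))
  · intro h x
    exact (key x).mpr ((mem_iff _).mp (h _))

theorem toAdd_lift_natAbs_le (f : Fin k → Multiplicative ℤ)
    (hf : ∀ i, (toAdd (f i)).natAbs ≤ 1) (w : FreeGroup (Fin k)) :
    (toAdd (FreeGroup.lift f w)).natAbs ≤ (FreeGroup.toWord w).length := by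
  have aux : ∀ L : List (Fin k × Bool),
      (toAdd ((L.map fun x => cond x.2 (f x.1) (f x.1)⁻¹).prod)).natAbs ≤ L.length := by
    intro L
    induction L with
    | nil => simp
    | cons x L ih =>
      rw [List.map_cons, List.prod_cons, toAdd_mul, List.length_cons]
      have hx : (toAdd (cond x.2 (f x.1) (f x.1)⁻¹)).natAbs ≤ 1 := by
        cases x.2 <;> simp [hf x.1]
      calc (toAdd (cond x.2 (f x.1) (f x.1)⁻¹) + toAdd ((L.map fun x => cond x.2 (f x.1) (f x.1)⁻¹).prod)).natAbs
          ≤ _ + _ := Int.natAbs_add_le _ _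
        _ ≤ L.length + 1 := by omega
        _ = _ := by omega
  conv_lhs => rw [← FreeGroup.mk_toWord (x := w)]
  rw [FreeGroup.lift_mk]
  exact aux _

theorem eval_lift (c : Fin k → (Fin d → Multiplicative ℤ)) (w : FreeGroup (Fin k)) (j : Fin d) :
    FreeGroup.lift c w j = FreeGroup.lift (fun i => c i j) w := by
  have : (Pi.evalMonoidHom (fun _ : Fin d => Multiplicative ℤ) j).comp (FreeGroup.lift c)
      = FreeGroup.lift (fun i => c i j) := by
    apply FreeGroup.ext_hom
    intro a
    simp
  exact DFunLike.congr_fun this w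

theorem expVec_natAbs_le (w : FreeGroup (Fin k)) (j : Fin k) :
    (expVec w j).natAbs ≤ (FreeGroup.toWord w).length := by
  rw [expVec, eval_lift]
  apply toAdd_lift_natAbs_le
  intro i
  simp only [stdE, toAdd_ofAdd]
  split <;> simp

def wordOf (a : Fin k → ℤ) : FreeGroup (Fin k) :=
  (List.ofFn (fun i => FreeGroup.of i ^ a i)).prod

theorem expVec_wordOf (a : Fin k → ℤ) : expVec (wordOf a) = a := by
  funext j
  rw [expVec, wordOf, map_list_prod, List.map_ofFn]
  have : ((List.ofFn fun i => FreeGroup.lift (stdE k) (FreeGroup.of i ^ a i)).prod : Fin k → Multiplicative ℤ)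
      = ∏ i, stdE k i ^ a i := by
    rw [List.prod_ofFn]
    simp [map_zpow]
  rw [show (List.ofFn (⇑(FreeGroup.lift (stdE k)) ∘ fun i => FreeGroup.of i ^ a i)) =
      List.ofFn fun i => FreeGroup.lift (stdE k) (FreeGroup.of i ^ a i) from rfl, this]
  rw [show (∏ i, stdE k i ^ a i) j = ∏ i, (stdE k i j) ^ a i by simp]
  rw [toAdd_prod]
  simp only [toAdd_zpow, stdE, toAdd_ofAdd, smul_eq_mul, mul_ite, mul_one, mul_zero]
  simp [Finset.sum_ite_eq']

theorem wordOf_length_le (a : Fin k → ℤ) :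
    (FreeGroup.toWord (wordOf a)).length ≤ ∑ i, (a i).natAbs := by
  have hz : ∀ (i : Fin k) (z : ℤ), FreeGroup.norm (FreeGroup.of i ^ z) ≤ z.natAbs := by
    intro i z
    cases z with
    | ofNat n => rw [Int.ofNat_eq_coe, zpow_natCast, FreeGroup.norm_of_pow]; simp
    | negSucc n => rw [zpow_negSucc, FreeGroup.norm_inv_eq, FreeGroup.norm_of_pow]; simp
  have aux : ∀ L : List (FreeGroup (Fin k)),
      FreeGroup.norm L.prod ≤ (L.map FreeGroup.norm).sum := by
    intro L
    induction L with
    | nil => simp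
    | cons x L ih =>
      rw [List.prod_cons, List.map_cons, List.sum_cons]
      calc FreeGroup.norm _ ≤ _ + _ := FreeGroup.norm_mul_le _ _
        _ ≤ _ := by omega
  calc (FreeGroup.toWord (wordOf a)).length
      ≤ ((List.ofFn (fun i => FreeGroup.of i ^ a i)).map FreeGroup.norm).sum := aux _
    _ = ∑ i, FreeGroup.norm (FreeGroup.of i ^ a i) := by rw [List.map_ofFn, List.sum_ofFn]; rfl
    _ ≤ ∑ i, (a i).natAbs := Finset.sum_le_sum fun i _ => hz i (a i)

theorem base_rep (N : ℤ) (hN : 0 < N) : ∀ (p : ℕ) (g : ℕ → ℤ), (∀ i, |g i| < N) →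
    ∑ i ∈ Finset.range p, g i * N ^ i = 0 → ∀ i < p, g i = 0 := by
  intro p
  induction p with
  | zero => intro g _ _ i hi; omega
  | succ p ih =>
    intro g hg hsum i hi
    rw [Finset.sum_range_succ'] at hsum
    have h1 : ∀ j ∈ Finset.range p, g (j+1) * N ^ (j+1) = (g (j+1) * N ^ j) * N := by
      intro j _; ring
    rw [Finset.sum_congr rfl h1, ← Finset.sum_mul] at hsum
    set S := ∑ j ∈ Finset.range p, g (j+1) * N ^ j with hS
    have hsum' : S * N + g 0 = 0 := by simpa using hsum
    have hg0 : g 0 = 0 := by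
      have hdvd : N ∣ g 0 := ⟨-S, by linear_combination hsum'⟩
      exact Int.eq_zero_of_abs_lt_dvd hdvd (by simpa using hg 0)
    have hS0 : S = 0 := by
      have h2 : S * N = 0 := by linarith
      exact (mul_eq_zero.mp h2).resolve_right (by omega)
    have := ih (fun j => g (j+1)) (fun j => hg (j+1)) hS0
    rcases i with _ | i
    · exact hg0
    · exact this i (by omega)

/-- `G` preforms `H` (written `G ⊑ H` in the paper). -/
def Preforms (G : Type*) (H : Type*) [Group G] [Group H] : Prop :=
  ∃ (k : ℕ) (t : Fin k → H), Subgroup.closure (Set.range t) = ⊤ ∧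
    ∀ R : ℕ, ∃ s : Fin k → G, Subgroup.closure (Set.range s) = ⊤ ∧
      ∀ w : FreeGroup (Fin k), (FreeGroup.toWord w).length ≤ R →
        (FreeGroup.lift s w = 1 ↔ FreeGroup.lift t w = 1)

/-- `ℤ^m ⊑ ℤ^n` if and only if `m ≤ n`. -/
theorem zpow_preforms_zpow_iff (m n : ℕ) (hm : 1 ≤ m) (hn : 1 ≤ n) :
    Preforms (Fin m → Multiplicative ℤ) (Fin n → Multiplicative ℤ) ↔ m ≤ n := by
  constructor
  · rintro ⟨k, t, htop, H⟩
    set t' : Fin k → Fin n → ℤ := fun i a => toAdd (t i a) with ht'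
    have Tsurj : Function.Surjective (Lmap t') :=
      Lmap_surjective _ ((closure_iff_span t).mp htop)
    set K := LinearMap.ker (Lmap t') with hK
    obtain ⟨p, u, hu⟩ := Submodule.fg_iff_exists_fin_generating_family.mp
      (IsNoetherian.noetherian K)
    set R := ∑ j, ∑ i, (u j i).natAbs with hR
    obtain ⟨s, hstop, hs⟩ := H R
    set s' : Fin k → Fin m → ℤ := fun i a => toAdd (s i a) with hs'
    have Ssurj : Function.Surjective (Lmap s') :=
      Lmap_surjective _ ((closure_iff_span s).mp hstop)
    have hker : K ≤ LinearMap.ker (Lmap s') := by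
      rw [← hu, Submodule.span_le]
      rintro x ⟨j, rfl⟩
      have hmemK : u j ∈ K := hu ▸ Submodule.subset_span (Set.mem_range_self j)
      have ht1 : FreeGroup.lift t (wordOf (u j)) = 1 := by
        rw [lift_eq_one_iff, expVec_wordOf]
        exact LinearMap.mem_ker.mp hmemK
      have hlen : (FreeGroup.toWord (wordOf (u j))).length ≤ R :=
        le_trans (wordOf_length_le _)
          (Finset.single_le_sum (f := fun j => ∑ i, (u j i).natAbs)
            (fun _ _ => Nat.zero_le _) (Finset.mem_univ j))
      have hs1 := (hs _ hlen).mpr ht1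
      rw [lift_eq_one_iff, expVec_wordOf] at hs1
      exact LinearMap.mem_ker.mpr hs1
    obtain ⟨σ, hσ⟩ := Module.projective_lifting_property (Lmap t') LinearMap.id Tsurj
    have hcompsurj : Function.Surjective ((Lmap s').comp σ) := by
      intro y
      obtain ⟨x, hx⟩ := Ssurj y
      refine ⟨Lmap t' x, ?_⟩
      have h0 : x - σ (Lmap t' x) ∈ K := by
        rw [hK, LinearMap.mem_ker, map_sub]
        have h1 : Lmap t' (σ (Lmap t' x)) = Lmap t' x := by
          have := DFunLike.congr_fun hσ (Lmap t' x)
          simpa using this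
        rw [h1, sub_self]
      have h2 := hker h0
      rw [LinearMap.mem_ker, map_sub, sub_eq_zero] at h2
      rw [LinearMap.comp_apply, ← h2]
      exact hx
    have hrank := LinearMap.rank_le_of_surjective _ hcompsurj
    rw [rank_fin_fun, rank_fin_fun] at hrank
    exact_mod_cast hrank
  · intro hmn
    refine ⟨n, stdE n, (closure_iff_span _).mpr ?_, ?_⟩
    · rw [Submodule.eq_top_iff']
      intro v
      rw [pi_eq_sum_univ v]
      refine Submodule.sum_mem _ fun i _ => Submodule.smul_mem _ _ ?_
      exact Submodule.subset_span ⟨i, rfl⟩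
    · intro R
      set N : ℤ := (R : ℤ) + 1 with hN
      set s : Fin n → Fin m → Multiplicative ℤ := fun i a =>
        ofAdd (if (i:ℕ) < m then (if (a:ℕ) = (i:ℕ) then 1 else 0)
          else (if (a:ℕ) = 0 then N ^ (i:ℕ) else 0)) with hsdef
      have hs'val : ∀ i a, toAdd (s i a) =
          (if (i:ℕ) < m then (if (a:ℕ) = (i:ℕ) then 1 else 0)
            else (if (a:ℕ) = 0 then N ^ (i:ℕ) else 0)) := fun i a => rfl
      refine ⟨s, (closure_iff_span _).mpr ?_, ?_⟩
      · rw [Submodule.eq_top_iff']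
        intro v
        rw [pi_eq_sum_univ v]
        refine Submodule.sum_mem _ fun a _ => Submodule.smul_mem _ _ ?_
        refine Submodule.subset_span ⟨⟨(a:ℕ), lt_of_lt_of_le a.isLt hmn⟩, ?_⟩
        funext j
        simp only [hs'val]
        simp only [a.isLt, if_pos]
        by_cases h : a = j
        · subst h; simp
        · rw [if_neg, if_neg h]
          exact fun hc => h (Fin.ext hc.symm)
      · intro w hw
        have hb : ∀ j, (expVec w j).natAbs ≤ R := fun j => le_trans (expVec_natAbs_le w j) hw
        rw [lift_eq_one_iff, lift_eq_one_iff]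
        set v := expVec w with hv
        have hT : Lmap (fun i a => toAdd (stdE n i a)) v = v := by
          funext a
          rw [Lmap_apply]
          have h2 : ∀ i : Fin n, (v i • fun a' => toAdd (stdE n i a')) a
              = if i = a then v i else 0 := by
            intro i
            simp [stdE, mul_ite]
          rw [Finset.sum_apply, Finset.sum_congr rfl fun i _ => h2 i]
          simp [Finset.sum_ite_eq']
        rw [hT]
        set vext : ℕ → ℤ := fun j => if h : j < n then v ⟨j, h⟩ else 0 with hvextdef
        have hvext : ∀ i : Fin n, vext (i:ℕ) = v i := by
          intro i
          simp only [hvextdef, dif_pos i.isLt, Fin.eta]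
        set g : ℕ → ℤ := fun j => if j = 0 then vext j else if m ≤ j then vext j else 0
          with hgdef
        constructor
        · intro hS
          have hgb : ∀ j, |g j| < N := by
            intro j
            have habs : |vext j| < N := by
              simp only [hvextdef]
              split
              · have h1 := hb ⟨j, by assumption⟩
                rw [Int.abs_eq_natAbs, hN]
                exact_mod_cast Nat.lt_succ_of_le h1
              · simp [hN]
            simp only [hgdef]
            split
            · exact habs
            · split
              · exact habs
              · simp [hN]
          have hc0 : ∑ j ∈ Finset.range n, g j * N ^ j = 0 := by
            have hS0 := congrFun hS (⟨0, hm⟩ : Fin m)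
            rw [Lmap_apply, Finset.sum_apply, Pi.zero_apply] at hS0
            have hterm : ∀ i : Fin n,
                (v i • fun a => toAdd (s i a)) (⟨0, hm⟩ : Fin m) = g (i:ℕ) * N ^ (i:ℕ) := by
              intro i
              simp only [Pi.smul_apply, smul_eq_mul, hs'val]
              by_cases him : (i:ℕ) < m
              · by_cases hi0 : (i:ℕ) = 0
                · rw [if_pos him, if_pos hi0.symm, mul_one,
                    show g (i:ℕ) = v i from by
                      simp only [hgdef]; rw [if_pos hi0, hvext],
                    hi0, pow_zero, mul_one]
                · rw [if_pos him, if_neg (fun hc => hi0 hc.symm),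
                    show g (i:ℕ) = 0 from by
                      simp only [hgdef]; rw [if_neg hi0, if_neg (by omega)]]
                  ring
              · rw [if_neg him, if_pos trivial,
                  show g (i:ℕ) = v i from by
                    simp only [hgdef]; rw [if_neg (by omega), if_pos (by omega), hvext]]
            rw [Finset.sum_congr rfl fun i _ => hterm i] at hS0
            rw [← Fin.sum_univ_eq_sum_range (fun j => g j * N ^ j) n]
            exact hS0
          have hall := base_rep N (by rw [hN]; positivity) n g hgb hc0
          funext a
          rw [Pi.zero_apply]
          by_cases ham : (a:ℕ) < m
          · by_cases ha0 : (a:ℕ) = 0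
            · have h3 := hall (a:ℕ) a.isLt
              rw [hgdef] at h3
              simp only [if_pos ha0] at h3
              rwa [hvext] at h3
            · have hS0 := congrFun hS (⟨(a:ℕ), ham⟩ : Fin m)
              rw [Lmap_apply, Finset.sum_apply, Pi.zero_apply] at hS0
              rw [Finset.sum_eq_single a] at hS0
              · simpa only [Pi.smul_apply, smul_eq_mul, hs'val, if_pos ham,
                  eq_self_iff_true, if_true, mul_one] using hS0
              · intro b _ hb'
                simp only [Pi.smul_apply, smul_eq_mul, hs'val]
                by_cases hbm : (b:ℕ) < m
                · rw [if_pos hbm, if_neg, mul_zero]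
                  exact fun hc => hb' (Fin.ext hc.symm)
                · rw [if_neg hbm, if_neg ha0, mul_zero]
              · intro habs; exact absurd (Finset.mem_univ a) habs
          · have h3 := hall (a:ℕ) a.isLt
            rw [hgdef] at h3
            simp only [if_neg (show ¬ (a:ℕ) = 0 by omega),
              if_pos (show m ≤ (a:ℕ) by omega)] at h3
            rwa [hvext] at h3
        · intro hv0
          rw [hv0]
          exact map_zero _
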